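/- Let R₁ ⊆ A × B and R₂ ⊆ B × C be finite relations, b a fixed element of B with degree d₂(b) = |{c : (b,c) ∈ R₂}| ≥ 1, and Δ ≥ max_{b'} d₂(b') an upper bound on all degrees in R₂. Consider the random process: sample (a,b) uniformly from R₁, sample c uniformly from {c : (b,c) ∈ R₂}, then accept with probability d₂(b)/Δ. Then each full join triple (a,b,c) ∈ R₁ ⋈ R₂ is returned with probability exactly 1/(|R₁|·Δ), and the overall success probability is OUT_⋈/(|R₁|·Δ). -/

import Mathlib

open scoped ENNReal

/-- The degree of `b` in `R₂`, i.e. `|R₂ ⋉ b|`. -/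
def deg2 {B C : Type*} [DecidableEq B] (R₂ : Finset (B × C)) (b : B) : ℕ :=
  (R₂.filter (fun q => q.1 = b)).card

/-- The rejection sampler `JoinSampleMatrix-L`: sample `(a,b)` uniformly from `R₁`, sample
`c` uniformly from the neighbors of `b` in `R₂`, then accept with probability `d₂(b)/Δ`. -/
noncomputable def lightProcess {A B C : Type*} [DecidableEq B]
    (R₁ : Finset (A × B)) (R₂ : Finset (B × C)) (Δ : ℕ)
    (h₁ : R₁.Nonempty) (hΔ : ∀ b, deg2 R₂ b ≤ Δ) : PMF (Option (A × B × C)) :=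
  (PMF.uniformOfFinset R₁ h₁).bind fun p =>
    if h : (R₂.filter (fun q => q.1 = p.2)).Nonempty then
      (PMF.uniformOfFinset _ h).bind fun q =>
        (PMF.bernoulli ((deg2 R₂ p.2 : ℝ≥0∞) / (Δ : ℝ≥0∞)).toNNReal
          (by
            have h : ((deg2 R₂ p.2 : ℝ≥0∞) / (Δ : ℝ≥0∞)) ≤ 1 :=
              ENNReal.div_le_of_le_mul (by rw [one_mul]; exact_mod_cast hΔ p.2)
            simpa using ENNReal.toNNReal_mono ENNReal.one_ne_top h)).bind fun acc =>
          PMF.pure (if acc then some (p.1, p.2, q.2) else none)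
    else PMF.pure none

lemma light_key {A B C : Type*} [DecidableEq A] [DecidableEq B] [DecidableEq C]
    (R₁ : Finset (A × B)) (R₂ : Finset (B × C)) (Δ : ℕ)
    (h₁ : R₁.Nonempty) (hΔ : ∀ b, deg2 R₂ b ≤ Δ)
    (a : A) (b : B) (c : C) (ha : (a, b) ∈ R₁) (hc : (b, c) ∈ R₂) :
    lightProcess R₁ R₂ Δ h₁ hΔ (some (a, b, c))
      = 1 / ((R₁.card : ℝ≥0∞) * (Δ : ℝ≥0∞)) := by
  classical
  have hne : (R₂.filter (fun q => q.1 = b)).Nonempty := ⟨(b, c), by simp [hc]⟩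
  have hdegnat : deg2 R₂ b ≠ 0 := by
    simp only [deg2, Finset.card_ne_zero]; exact hne
  have hdeg0 : (deg2 R₂ b : ℝ≥0∞) ≠ 0 := by exact_mod_cast hdegnat
  have hcard0 : (R₁.card : ℝ≥0∞) ≠ 0 := by
    exact_mod_cast Finset.card_ne_zero.mpr h₁
  rw [lightProcess, PMF.bind_apply]
  rw [tsum_eq_single ((a, b) : A × B)]
  · simp only
    rw [dif_pos hne, PMF.bind_apply]
    rw [tsum_eq_single ((b, c) : B × C)]
    · rw [PMF.bind_apply, tsum_bool]
      simp only [PMF.bernoulli_apply, Bool.cond_false, Bool.cond_true,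
        if_true, if_false, PMF.pure_apply]
      rw [if_neg (by simp), PMF.uniformOfFinset_apply_of_mem _ ha,
        PMF.uniformOfFinset_apply_of_mem _ (by simp [hc])]
      have hΔ0 : (Δ : ℝ≥0∞) ≠ 0 := by
        have := hΔ b
        exact_mod_cast (show Δ ≠ 0 by omega)
      rw [ENNReal.coe_sub, ENNReal.coe_one, ENNReal.coe_toNNReal (ENNReal.div_ne_top (ENNReal.natCast_ne_top _) hΔ0)]
      show (R₁.card : ℝ≥0∞)⁻¹ *
        (((R₂.filter (fun q => q.1 = b)).card : ℝ≥0∞)⁻¹ *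
          ((1 - (deg2 R₂ b : ℝ≥0∞) / Δ) * 0 + (deg2 R₂ b : ℝ≥0∞) / Δ * 1)) = _
      rw [mul_zero, zero_add, mul_one, div_eq_mul_inv]
      show (R₁.card : ℝ≥0∞)⁻¹ * ((deg2 R₂ b : ℝ≥0∞)⁻¹ * ((deg2 R₂ b : ℝ≥0∞) * (Δ:ℝ≥0∞)⁻¹)) = _
      rw [← mul_assoc ((deg2 R₂ b : ℝ≥0∞)⁻¹), ENNReal.inv_mul_cancel hdeg0 (ENNReal.natCast_ne_top _),
        one_mul, one_div, ENNReal.mul_inv (Or.inl hcard0) (Or.inl (ENNReal.natCast_ne_top _))]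
    · intro q hq
      by_cases hmem : q ∈ R₂.filter (fun q => q.1 = b)
      · have hq1 : q.1 = b := (Finset.mem_filter.mp hmem).2
        have hq2 : q.2 ≠ c := by
          intro h2; exact hq (Prod.ext hq1 h2)
        rw [PMF.bind_apply, tsum_bool]
        simp [PMF.pure_apply, hq2, Ne.symm hq2]
      · simp [PMF.uniformOfFinset_apply, hmem]
  · intro p hp
    by_cases hmem : p ∈ R₁
    · rcases Prod.mk.injEq .. ▸ (fun h => hp h) with _
      have hne' : p.1 ≠ a ∨ p.2 ≠ b := by
        by_contra h
        push_neg at h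
        exact hp (Prod.ext h.1 h.2)
      split_ifs with h
      · rw [PMF.bind_apply]
        rw [mul_eq_zero]
        right
        rw [ENNReal.tsum_eq_zero]
        intro q
        rw [PMF.bind_apply, tsum_bool]
        simp only [PMF.pure_apply, if_true, if_false]
        have : ¬ (some (a,b,c) = some (p.1, p.2, q.2)) := by
          intro heq
          rcases hne' with h' | h' <;> simp_all
        simp [this]
      · simp [PMF.pure_apply]
    · simp [PMF.uniformOfFinset_apply, hmem]

/-- Each full join triple `(a,b,c) ∈ R₁ ⋈ R₂` is returned by `JoinSampleMatrix-L` with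
probability exactly `1/(|R₁|·Δ)`, and the overall success probability is
`OUT_⋈/(|R₁|·Δ)`. -/
theorem stmt6 {A B C : Type*} [Fintype A] [Fintype B] [Fintype C]
    [DecidableEq A] [DecidableEq B] [DecidableEq C]
    (R₁ : Finset (A × B)) (R₂ : Finset (B × C)) (Δ : ℕ)
    (h₁ : R₁.Nonempty) (hΔ : ∀ b', deg2 R₂ b' ≤ Δ)
    (OUTJoin : ℕ)
    (hJoin : OUTJoin = ((Finset.univ : Finset (A × B × C)).filter
      (fun t => (t.1, t.2.1) ∈ R₁ ∧ (t.2.1, t.2.2) ∈ R₂)).card) :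
    (∀ (a : A) (b : B) (c : C), (a, b) ∈ R₁ → (b, c) ∈ R₂ → 1 ≤ deg2 R₂ b →
      lightProcess R₁ R₂ Δ h₁ hΔ (some (a, b, c))
          = 1 / ((R₁.card : ℝ≥0∞) * (Δ : ℝ≥0∞))) ∧
    ∑ t ∈ (Finset.univ : Finset (A × B × C)).filter
        (fun t => (t.1, t.2.1) ∈ R₁ ∧ (t.2.1, t.2.2) ∈ R₂),
      lightProcess R₁ R₂ Δ h₁ hΔ (some t)
        = (OUTJoin : ℝ≥0∞) / ((R₁.card : ℝ≥0∞) * (Δ : ℝ≥0∞)) := by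
  classical
  refine ⟨fun a b c ha hc _ => light_key R₁ R₂ Δ h₁ hΔ a b c ha hc, ?_⟩
  rw [Finset.sum_congr rfl (fun t ht => ?_)]
  · rw [Finset.sum_const, hJoin, nsmul_eq_mul, mul_one_div]
  · obtain ⟨h1, h2⟩ := (Finset.mem_filter.mp ht).2
    exact light_key R₁ R₂ Δ h₁ hΔ t.1 t.2.1 t.2.2 h1 h2
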